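/- Let I be an ideal of k[x₁,…,x_n] generated by f₁,…,f_r, let α ∈ (ℤ_{>0})^n, and let I^(h) ⊆ k[x,h] be the ideal generated by the α-homogenizations h_α(f₁),…,h_α(f_r). For weight vectors u, u' ∈ ℝ^n (assigning weight 0 to h), if in_u(I^(h)) = in_{u'}(I^(h)) then in_u(I) = in_{u'}(I). Hence the Gröbner fan of I^(h) refines the Gröbner fan of I. -/

import Mathlib

open scoped Classical

noncomputable section

/-- The `u`-weight of an exponent vector. -/
def wtF {n : ℕ} (u : Fin n → ℝ) (β : Fin n →₀ ℕ) : ℝ := ∑ i, u i * (β i : ℝ)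

/-- The `u`-order of a polynomial: the maximal `u`-weight of its support (0 for the zero
polynomial). -/
def pord {n : ℕ} {K : Type*} [CommSemiring K] (u : Fin n → ℝ)
    (f : MvPolynomial (Fin n) K) : ℝ :=
  if h : f = 0 then 0
  else f.support.sup' (MvPolynomial.support_nonempty.mpr h) (wtF u)

/-- The initial form `in_u(f)`: the sum of the terms of `f` of maximal `u`-weight. -/
def initForm {n : ℕ} {K : Type*} [CommSemiring K] (u : Fin n → ℝ)
    (f : MvPolynomial (Fin n) K) : MvPolynomial (Fin n) K :=
  ∑ β ∈ f.support.filter (fun β => wtF u β = pord u f),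
    MvPolynomial.monomial β (MvPolynomial.coeff β f)

/-- The initial ideal `in_u(I)`. -/
def initIdeal {n : ℕ} {K : Type*} [CommSemiring K] (u : Fin n → ℝ)
    (I : Ideal (MvPolynomial (Fin n) K)) : Ideal (MvPolynomial (Fin n) K) :=
  Ideal.span {g | ∃ f ∈ I, f ≠ 0 ∧ g = initForm u f}

/-- `F ∈ k[x,h]` is the `α`-homogenization of `f ∈ k[x]`: `F` is `α`-homogeneous (where `h`,
the last variable, has `α`-weight 1), `F|_{h=1} = f`, and the `α`-degree of `F` equals the
`α`-degree of `f`. -/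
def IsHomogenization {n : ℕ} {K : Type*} [CommSemiring K] (α : Fin n → ℕ)
    (f : MvPolynomial (Fin n) K) (F : MvPolynomial (Fin (n + 1)) K) : Prop :=
  (MvPolynomial.aeval (fun j : Fin (n + 1) =>
      if h : (j : ℕ) < n then (MvPolynomial.X ⟨j, h⟩ : MvPolynomial (Fin n) K) else 1) F
    = f) ∧
  ∃ d : ℕ,
    (∀ β ∈ F.support, (∑ i : Fin n, α i * β i.castSucc) + β (Fin.last n) = d) ∧
    (∀ γ ∈ f.support, ∑ i : Fin n, α i * γ i ≤ d) ∧
    (f ≠ 0 → ∃ γ ∈ f.support, ∑ i : Fin n, α i * γ i = d)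

/-- Extension of a weight vector `u` on the `x`-variables by weight `0` on `h`. -/
def uext {n : ℕ} (u : Fin n → ℝ) : Fin (n + 1) → ℝ :=
  fun j => if h : (j : ℕ) < n then u ⟨j, h⟩ else 0

namespace GF

open MvPolynomial

variable {n r : ℕ} {K : Type*} [CommSemiring K]

/-- Restriction of an exponent vector on `Fin (n+1)` to the first `n` variables. -/
def restrF {n : ℕ} (δ : Fin (n + 1) →₀ ℕ) : Fin n →₀ ℕ :=
  Finsupp.equivFunOnFinite.symm (fun i => δ i.castSucc)

/-- Extension of an exponent vector by a last exponent `m`. -/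
def extF {n : ℕ} (γ : Fin n →₀ ℕ) (m : ℕ) : Fin (n + 1) →₀ ℕ :=
  Finsupp.equivFunOnFinite.symm (Fin.snoc γ m)

@[simp] lemma restrF_apply (δ : Fin (n + 1) →₀ ℕ) (i : Fin n) : restrF δ i = δ i.castSucc := rfl

lemma extF_apply (γ : Fin n →₀ ℕ) (m : ℕ) (j : Fin (n + 1)) :
    extF γ m j = Fin.snoc (α := fun _ => ℕ) (⇑γ) m j := by
  simp [extF]

@[simp] lemma extF_castSucc (γ : Fin n →₀ ℕ) (m : ℕ) (i : Fin n) :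
    extF γ m i.castSucc = γ i := by
  rw [extF_apply]; simp

@[simp] lemma extF_last (γ : Fin n →₀ ℕ) (m : ℕ) : extF γ m (Fin.last n) = m := by
  rw [extF_apply]; simp

lemma restrF_extF (γ : Fin n →₀ ℕ) (m : ℕ) : restrF (extF γ m) = γ := by
  ext i; simp

/-- The `α`-weight on `k[x,h]`: the last variable `h` gets weight `1`. -/
def wA (n : ℕ) (α : Fin n → ℕ) : Fin (n + 1) → ℕ := Fin.snoc α 1

lemma weight_wA (α : Fin n → ℕ) (δ : Fin (n + 1) →₀ ℕ) :
    Finsupp.weight (wA n α) δ = (∑ i : Fin n, α i * δ i.castSucc) + δ (Fin.last n) := by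
  rw [Finsupp.weight_apply, Finsupp.sum_fintype, Fin.sum_univ_castSucc]
  · simp [wA, mul_comm]
  · intro j; exact zero_smul _ _

/-- Dehomogenization: substitute `1` for the last variable. -/
def deh (n : ℕ) (K : Type*) [CommSemiring K] :
    MvPolynomial (Fin (n + 1)) K →ₐ[K] MvPolynomial (Fin n) K :=
  MvPolynomial.aeval (fun j : Fin (n + 1) =>
    if h : (j : ℕ) < n then (MvPolynomial.X ⟨j, h⟩ : MvPolynomial (Fin n) K) else 1)

lemma deh_X_castSucc (i : Fin n) :
    deh n K (X i.castSucc) = X i := by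
  rw [deh, aeval_X]
  simp

lemma deh_X_last : deh n K (X (Fin.last n)) = 1 := by
  rw [deh, aeval_X]
  simp

lemma deh_monomial (δ : Fin (n + 1) →₀ ℕ) (c : K) :
    deh n K (monomial δ c) = monomial (restrF δ) c := by
  rw [monomial_eq, monomial_eq, map_mul]
  congr 1
  · rw [show ((C c : MvPolynomial (Fin (n+1)) K)) = algebraMap K _ c from rfl]
    rw [AlgHom.commutes]
    rfl
  · rw [Finsupp.prod_fintype, Finsupp.prod_fintype, map_prod, Fin.prod_univ_castSucc]
    · simp [map_pow, deh_X_castSucc, deh_X_last]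
    · exact fun j => pow_zero _
    · exact fun j => pow_zero _

lemma wtF_uext (u : Fin n → ℝ) (δ : Fin (n + 1) →₀ ℕ) :
    wtF (uext u) δ = wtF u (restrF δ) := by
  rw [wtF, wtF, Fin.sum_univ_castSucc]
  have h1 : ∀ i : Fin n, uext u i.castSucc = u i := by
    intro i
    simp [uext]
  have h2 : uext u (Fin.last n) = 0 := by simp [uext]
  simp [h1, h2]

lemma restr_injOn {α : Fin n → ℕ} {d : ℕ} {P : MvPolynomial (Fin (n + 1)) K}
    (hP : P.IsWeightedHomogeneous (wA n α) d) : Set.InjOn (restrF (n := n)) ↑P.support := by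
  intro x hx y hy hxy
  have hx' := hP (mem_support_iff.mp (by exact_mod_cast hx))
  have hy' := hP (mem_support_iff.mp (by exact_mod_cast hy))
  rw [weight_wA] at hx' hy'
  have hc : ∀ i : Fin n, x i.castSucc = y i.castSucc := by
    intro i
    rw [← restrF_apply, ← restrF_apply, hxy]
  have hsum : ∑ i : Fin n, α i * x i.castSucc = ∑ i : Fin n, α i * y i.castSucc :=
    Finset.sum_congr rfl (fun i _ => by rw [hc])
  have hlast : x (Fin.last n) = y (Fin.last n) := by omega
  ext j
  cases j using Fin.lastCases with
  | last => exact hlast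
  | cast i => exact hc i

lemma deh_eq_sum (P : MvPolynomial (Fin (n + 1)) K) :
    deh n K P = ∑ δ ∈ P.support, monomial (restrF δ) (coeff δ P) := by
  conv_lhs => rw [P.as_sum]
  rw [map_sum]
  exact Finset.sum_congr rfl fun δ _ => deh_monomial δ _

lemma coeff_deh_restr {α : Fin n → ℕ} {d : ℕ} {P : MvPolynomial (Fin (n + 1)) K}
    (hP : P.IsWeightedHomogeneous (wA n α) d) {δ : Fin (n + 1) →₀ ℕ} (hδ : δ ∈ P.support) :
    coeff (restrF δ) (deh n K P) = coeff δ P := by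
  rw [deh_eq_sum, coeff_sum, Finset.sum_eq_single_of_mem δ hδ]
  · rw [coeff_monomial, if_pos rfl]
  · intro b hb hbδ
    rw [coeff_monomial, if_neg fun hcon => hbδ (restr_injOn hP (by exact_mod_cast hb)
      (by exact_mod_cast hδ) hcon)]

lemma support_deh {α : Fin n → ℕ} {d : ℕ} {P : MvPolynomial (Fin (n + 1)) K}
    (hP : P.IsWeightedHomogeneous (wA n α) d) :
    (deh n K P).support = P.support.image restrF := by
  ext γ
  simp only [mem_support_iff, Finset.mem_image]
  constructor
  · intro hγ
    by_contra hcon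
    push_neg at hcon
    apply hγ
    rw [deh_eq_sum, coeff_sum]
    apply Finset.sum_eq_zero
    intro b hb
    rw [coeff_monomial, if_neg (hcon b (mem_support_iff.mp hb))]
  · rintro ⟨δ, hδ, rfl⟩
    rw [coeff_deh_restr hP (mem_support_iff.mpr hδ)]
    exact hδ

lemma deh_ne_zero {α : Fin n → ℕ} {d : ℕ} {P : MvPolynomial (Fin (n + 1)) K}
    (h0 : P ≠ 0) (hP : P.IsWeightedHomogeneous (wA n α) d) : deh n K P ≠ 0 := by
  rw [← support_nonempty, support_deh hP]
  exact (support_nonempty.mpr h0).image _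

lemma pord_deh (u : Fin n → ℝ) {α : Fin n → ℕ} {d : ℕ} {P : MvPolynomial (Fin (n + 1)) K}
    (h0 : P ≠ 0) (hP : P.IsWeightedHomogeneous (wA n α) d) :
    pord u (deh n K P) = pord (uext u) P := by
  rw [pord, pord, dif_neg (deh_ne_zero h0 hP), dif_neg h0]
  apply le_antisymm
  · apply Finset.sup'_le
    intro γ hγ
    rw [support_deh hP] at hγ
    obtain ⟨δ, hδ, rfl⟩ := Finset.mem_image.mp hγ
    rw [← wtF_uext]
    exact Finset.le_sup' _ hδ
  · apply Finset.sup'_le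
    intro δ hδ
    rw [wtF_uext]
    exact Finset.le_sup' (wtF u) (by rw [support_deh hP]; exact Finset.mem_image_of_mem _ hδ)

lemma coeff_initForm (u : Fin n → ℝ) (p : MvPolynomial (Fin n) K) (β : Fin n →₀ ℕ) :
    coeff β (initForm u p) = if wtF u β = pord u p then coeff β p else 0 := by
  rw [initForm, coeff_sum]
  simp only [coeff_monomial]
  rw [Finset.sum_ite_eq' (p.support.filter fun γ => wtF u γ = pord u p) β (fun γ => coeff γ p)]
  by_cases h1 : wtF u β = pord u p
  · by_cases h2 : β ∈ p.support
    · simp [Finset.mem_filter, h1, h2]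
    · rw [mem_support_iff, not_not] at h2
      simp [Finset.mem_filter, h1, h2]
  · simp [Finset.mem_filter, h1]

lemma initForm_deh (u : Fin n → ℝ) {α : Fin n → ℕ} {d : ℕ} {P : MvPolynomial (Fin (n + 1)) K}
    (h0 : P ≠ 0) (hP : P.IsWeightedHomogeneous (wA n α) d) :
    deh n K (initForm (uext u) P) = initForm u (deh n K P) := by
  have hfilt : (deh n K P).support.filter (fun γ => wtF u γ = pord u (deh n K P))
      = (P.support.filter fun δ => wtF (uext u) δ = pord (uext u) P).image restrF := by
    rw [support_deh hP, Finset.filter_image]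
    congr 1
    apply Finset.filter_congr
    intro δ _
    rw [wtF_uext, pord_deh u h0 hP]
  rw [initForm, initForm, map_sum, hfilt, Finset.sum_image]
  · refine Finset.sum_congr rfl fun δ hδ => ?_
    rw [Finset.mem_filter] at hδ
    rw [deh_monomial, coeff_deh_restr hP hδ.1]
  · intro x hx y hy hxy
    rw [Finset.mem_coe, Finset.mem_filter] at hx hy
    exact restr_injOn hP (by exact_mod_cast hx.1) (by exact_mod_cast hy.1) hxy

lemma comp_initForm (v : Fin (n + 1) → ℝ) (α : Fin n → ℕ) (P : MvPolynomial (Fin (n + 1)) K)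
    (m : ℕ) :
    weightedHomogeneousComponent (wA n α) m (initForm v P) = 0 ∨
      (weightedHomogeneousComponent (wA n α) m P ≠ 0 ∧
       weightedHomogeneousComponent (wA n α) m (initForm v P) =
         initForm v (weightedHomogeneousComponent (wA n α) m P)) := by
  by_cases hQ : weightedHomogeneousComponent (wA n α) m (initForm v P) = 0
  · exact Or.inl hQ
  right
  obtain ⟨δ0, hδ0⟩ := MvPolynomial.ne_zero_iff.mp hQ
  rw [coeff_weightedHomogeneousComponent] at hδ0
  have hw0 : Finsupp.weight (wA n α) δ0 = m := by
    by_contra hcon; rw [if_neg hcon] at hδ0; exact hδ0 rfl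
  rw [if_pos hw0, coeff_initForm] at hδ0
  have hwt0 : wtF v δ0 = pord v P := by
    by_contra hcon; rw [if_neg hcon] at hδ0; exact hδ0 rfl
  rw [if_pos hwt0] at hδ0
  have hP0 : P ≠ 0 := fun hcon => hδ0 (by rw [hcon, coeff_zero])
  set P' := weightedHomogeneousComponent (wA n α) m P with hP'def
  have hcoeffP' : ∀ δ, coeff δ P' = if Finsupp.weight (wA n α) δ = m then coeff δ P else 0 :=
    fun δ => coeff_weightedHomogeneousComponent m P δ
  have hδ0P' : coeff δ0 P' ≠ 0 := by rw [hcoeffP', if_pos hw0]; exact hδ0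
  have hP'0 : P' ≠ 0 := fun hcon => hδ0P' (by rw [hcon, coeff_zero])
  have hsupp : P'.support ⊆ P.support := by
    intro δ hδ
    rw [mem_support_iff] at hδ ⊢
    rw [hcoeffP'] at hδ
    intro hcon
    apply hδ
    split_ifs <;> simp [hcon]
  have hpord : pord v P' = pord v P := by
    have hwt0' : wtF v δ0 = P.support.sup' (support_nonempty.mpr hP0) (wtF v) := by
      rw [hwt0, pord, dif_neg hP0]
    rw [pord, pord, dif_neg hP'0, dif_neg hP0]
    apply le_antisymm
    · exact Finset.sup'_le _ _ fun δ hδ => Finset.le_sup' (wtF v) (hsupp hδ)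
    · rw [← hwt0']
      exact Finset.le_sup' (wtF v) (mem_support_iff.mpr hδ0P')
  refine ⟨hP'0, ?_⟩
  ext δ
  rw [coeff_weightedHomogeneousComponent, coeff_initForm, coeff_initForm, hcoeffP', hpord]
  by_cases h1 : Finsupp.weight (wA n α) δ = m <;> by_cases h2 : wtF v δ = pord v P <;>
    simp [h1, h2]

lemma sum_components (α : Fin n → ℕ) (Q : MvPolynomial (Fin (n + 1)) K) :
    Q = ∑ m ∈ Q.support.image (Finsupp.weight (wA n α)),
      weightedHomogeneousComponent (wA n α) m Q := by
  ext δ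
  rw [coeff_sum]
  simp only [coeff_weightedHomogeneousComponent]
  rw [Finset.sum_ite_eq (Q.support.image (Finsupp.weight (wA n α)))
    (Finsupp.weight (wA n α) δ) (fun _ => coeff δ Q)]
  by_cases hδ : δ ∈ Q.support
  · rw [if_pos (Finset.mem_image_of_mem _ hδ)]
  · rw [mem_support_iff, not_not] at hδ
    rw [hδ]
    split_ifs <;> rfl

lemma component_mem {α : Fin n → ℕ} {F : Fin r → MvPolynomial (Fin (n + 1)) K}
    (dF : Fin r → ℕ) (hdF : ∀ i, (F i).IsWeightedHomogeneous (wA n α) (dF i))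
    {P : MvPolynomial (Fin (n + 1)) K} (hP : P ∈ Ideal.span (Set.range F)) (m : ℕ) :
    weightedHomogeneousComponent (wA n α) m P ∈ Ideal.span (Set.range F) := by
  letI : GradedAlgebra (weightedHomogeneousSubmodule K (wA n α)) :=
    weightedGradedAlgebra K (wA n α)
  have hhom : (Ideal.span (Set.range F)).IsHomogeneous
      (weightedHomogeneousSubmodule K (wA n α)) := by
    apply Ideal.homogeneous_span
    rintro x ⟨i, rfl⟩
    exact ⟨dF i, (mem_weightedHomogeneousSubmodule _ _ _ _).mpr (hdF i)⟩
  have hmem := hhom m hP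
  have hdec : ((DirectSum.decompose (weightedHomogeneousSubmodule K (wA n α)) P m :
      weightedHomogeneousSubmodule K (wA n α) m) : MvPolynomial (Fin (n + 1)) K)
      = weightedHomogeneousComponent (wA n α) m P :=
    MvPolynomial.weightedDecomposition.decompose'_apply K (wA n α) P m
  rwa [hdec] at hmem

def degN (α : Fin n → ℕ) (γ : Fin n →₀ ℕ) : ℕ := ∑ i, α i * γ i

lemma weight_extF (α : Fin n → ℕ) (γ : Fin n →₀ ℕ) (m : ℕ) :
    Finsupp.weight (wA n α) (extF γ m) = degN α γ + m := by
  rw [weight_wA]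
  simp [degN]

/-- The `α`-homogenization of a polynomial in `n` variables. -/
def homize (α : Fin n → ℕ) (p : MvPolynomial (Fin n) K) : MvPolynomial (Fin (n + 1)) K :=
  ∑ γ ∈ p.support, monomial (extF γ (p.support.sup (degN α) - degN α γ)) (coeff γ p)

lemma homize_isWH (α : Fin n → ℕ) (p : MvPolynomial (Fin n) K) :
    (homize α p).IsWeightedHomogeneous (wA n α) (p.support.sup (degN α)) := by
  apply IsWeightedHomogeneous.sum
  intro γ hγ
  apply isWeightedHomogeneous_monomial
  rw [weight_extF]
  have := Finset.le_sup (f := degN α) hγ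
  omega

lemma deh_homize (α : Fin n → ℕ) (p : MvPolynomial (Fin n) K) :
    deh n K (homize α p) = p := by
  rw [homize, map_sum]
  conv_rhs => rw [p.as_sum]
  exact Finset.sum_congr rfl fun γ _ => by rw [deh_monomial, restrF_extF]

lemma isWH_X_last_pow (α : Fin n → ℕ) (m : ℕ) :
    ((X (Fin.last n) : MvPolynomial (Fin (n + 1)) K) ^ m).IsWeightedHomogeneous (wA n α) m := by
  rw [X_pow_eq_monomial]
  apply isWeightedHomogeneous_monomial
  rw [Finsupp.weight_apply, Finsupp.sum_single_index]
  · simp [wA]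
  · exact zero_smul _ _

lemma exists_homog_lift {α : Fin n → ℕ} {f : Fin r → MvPolynomial (Fin n) K}
    {F : Fin r → MvPolynomial (Fin (n + 1)) K}
    (hFf : ∀ i, deh n K (F i) = f i) (dF : Fin r → ℕ)
    (hdF : ∀ i, (F i).IsWeightedHomogeneous (wA n α) (dF i))
    {g : MvPolynomial (Fin n) K} (hg : g ∈ Ideal.span (Set.range f)) :
    ∃ G ∈ Ideal.span (Set.range F), ∃ D : ℕ,
      G.IsWeightedHomogeneous (wA n α) D ∧ deh n K G = g := by
  obtain ⟨c, hc⟩ := (Submodule.mem_span_range_iff_exists_fun _).mp hg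
  set E : Fin r → ℕ := fun i => (c i).support.sup (degN α) + dF i with hE
  set D := Finset.univ.sup E with hD
  refine ⟨∑ i, X (Fin.last n) ^ (D - E i) * (homize α (c i) * F i), ?_, D, ?_, ?_⟩
  · exact Ideal.sum_mem _ fun i _ => Ideal.mul_mem_left _ _
      (Ideal.mul_mem_left _ _ (Ideal.subset_span ⟨i, rfl⟩))
  · apply IsWeightedHomogeneous.sum
    intro i _
    have h1 := (isWH_X_last_pow (K := K) α (D - E i)).mul ((homize_isWH α (c i)).mul (hdF i))
    have hEi : E i ≤ D := Finset.le_sup (Finset.mem_univ i)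
    have h2 : D - E i + ((c i).support.sup (degN α) + dF i) = D := by
      have h3 : (c i).support.sup (degN α) + dF i = E i := rfl
      rw [h3]
      omega
    rwa [h2] at h1
  · rw [map_sum]
    simp only [map_mul, map_pow, deh_X_last, one_pow, one_mul, deh_homize, hFf]
    simpa [smul_eq_mul] using hc

lemma deh_mem_span {f : Fin r → MvPolynomial (Fin n) K}
    {F : Fin r → MvPolynomial (Fin (n + 1)) K} (hFf : ∀ i, deh n K (F i) = f i)
    {P : MvPolynomial (Fin (n + 1)) K} (hP : P ∈ Ideal.span (Set.range F)) :
    deh n K P ∈ Ideal.span (Set.range f) := by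
  induction hP using Submodule.span_induction with
  | mem x hx =>
    obtain ⟨i, rfl⟩ := hx
    rw [hFf i]
    exact Ideal.subset_span ⟨i, rfl⟩
  | zero => simp
  | add x y _ _ hx hy => rw [map_add]; exact add_mem hx hy
  | smul a x _ hx => rw [smul_eq_mul, map_mul]; exact Ideal.mul_mem_left _ _ hx

lemma deh_initIdeal {α : Fin n → ℕ} {f : Fin r → MvPolynomial (Fin n) K}
    {F : Fin r → MvPolynomial (Fin (n + 1)) K} (hFf : ∀ i, deh n K (F i) = f i)
    (dF : Fin r → ℕ) (hdF : ∀ i, (F i).IsWeightedHomogeneous (wA n α) (dF i))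
    (u' : Fin n → ℝ) {x : MvPolynomial (Fin (n + 1)) K}
    (hx : x ∈ initIdeal (uext u') (Ideal.span (Set.range F))) :
    deh n K x ∈ initIdeal u' (Ideal.span (Set.range f)) := by
  induction hx using Submodule.span_induction with
  | zero => simp
  | add x y _ _ hx hy => rw [map_add]; exact add_mem hx hy
  | smul a x _ hx => rw [smul_eq_mul, map_mul]; exact Ideal.mul_mem_left _ _ hx
  | mem x hx =>
    obtain ⟨P, hPmem, hP0, rfl⟩ := hx
    rw [sum_components α (initForm (uext u') P), map_sum]
    apply Ideal.sum_mem
    intro m _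
    rcases comp_initForm (uext u') α P m with h0 | ⟨hne, heq⟩
    · rw [h0, map_zero]
      exact Ideal.zero_mem _
    · rw [heq, initForm_deh u' hne (weightedHomogeneousComponent_isWeightedHomogeneous m P)]
      apply Ideal.subset_span
      exact ⟨deh n K (weightedHomogeneousComponent (wA n α) m P),
        deh_mem_span hFf (component_mem dF hdF hPmem m),
        deh_ne_zero hne (weightedHomogeneousComponent_isWeightedHomogeneous m P), rfl⟩

end GF

/-- Let `I = ⟨f_1,…,f_r⟩ ⊆ k[x]`, `α` a positive weight vector, and
`I^(h) = ⟨h_α(f_1),…,h_α(f_r)⟩ ⊆ k[x,h]`.  If two weight vectors give the same initial ideal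
of `I^(h)` then they give the same initial ideal of `I`; hence the Gröbner fan of `I^(h)`
refines that of `I`. -/
theorem homogenized_fan_refines {n r : ℕ} {K : Type*} [Field K]
    (α : Fin n → ℕ) (hα : ∀ i, 0 < α i)
    (f : Fin r → MvPolynomial (Fin n) K) (F : Fin r → MvPolynomial (Fin (n + 1)) K)
    (hF : ∀ i, IsHomogenization α (f i) (F i))
    (u u' : Fin n → ℝ)
    (h : initIdeal (uext u) (Ideal.span (Set.range F)) =
      initIdeal (uext u') (Ideal.span (Set.range F))) :
    initIdeal u (Ideal.span (Set.range f)) = initIdeal u' (Ideal.span (Set.range f)) := by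
  have hFf : ∀ i, GF.deh n K (F i) = f i := fun i => (hF i).1
  choose dF hdF hle hex using fun i => (hF i).2
  have hdF' : ∀ i, (F i).IsWeightedHomogeneous (GF.wA n α) (dF i) := by
    intro i δ hδ
    rw [GF.weight_wA]
    exact hdF i δ (MvPolynomial.mem_support_iff.mpr hδ)
  have main : ∀ v v' : Fin n → ℝ,
      initIdeal (uext v) (Ideal.span (Set.range F)) ≤
        initIdeal (uext v') (Ideal.span (Set.range F)) →
      initIdeal v (Ideal.span (Set.range f)) ≤ initIdeal v' (Ideal.span (Set.range f)) := by
    intro v v' hsub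
    refine Ideal.span_le.mpr ?_
    rintro x ⟨g, hgmem, hg0, rfl⟩
    obtain ⟨G, hGmem, D, hGhom, hGdeh⟩ := GF.exists_homog_lift hFf dF hdF' hgmem
    have hG0 : G ≠ 0 := fun hcon => hg0 (by rw [← hGdeh, hcon, map_zero])
    have h1 : initForm (uext v) G ∈ initIdeal (uext v') (Ideal.span (Set.range F)) :=
      hsub (Ideal.subset_span ⟨G, hGmem, hG0, rfl⟩)
    have h2 := GF.deh_initIdeal hFf dF hdF' v' h1
    rwa [GF.initForm_deh v hG0 hGhom, hGdeh] at h2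
  exact le_antisymm (main u u' (le_of_eq h)) (main u' u (le_of_eq h.symm))
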